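/- Let G be a finite group, p a prime, and H ≤ G a subgroup. Then H contains O^p(G) if and only if H is p-subnormal in G, i.e. there exists a chain of subgroups H = H_0 ⊴ H_1 ⊴ ... ⊴ H_n = G with each H_i normal in H_{i+1} of index a power of p. -/

import Mathlib

/-- `O^p(G)`: the smallest normal subgroup of `G` whose index is a power of `p`. -/
def pResidual (p : ℕ) (G : Type*) [Group G] : Subgroup G :=
  sInf {N : Subgroup G | N.Normal ∧ ∃ k : ℕ, N.index = p ^ k}

/-- A subgroup `H ≤ G` is `p`-subnormal if there is a chain
`H = H_0 ⊴ H_1 ⊴ ... ⊴ H_n = G` with each term normal of `p`-power index in the next. -/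
def IsPSubnormal (p : ℕ) {G : Type*} [Group G] (H : Subgroup G) : Prop :=
  ∃ (n : ℕ) (c : Fin (n + 1) → Subgroup G), c 0 = H ∧ c (Fin.last n) = ⊤ ∧
    ∀ i : Fin n, ((c i.castSucc).subgroupOf (c i.succ)).Normal ∧
      ∃ k : ℕ, ((c i.castSucc).subgroupOf (c i.succ)).index = p ^ k

section Aux

variable {G : Type*} [Group G]

/-- If `N` is normal of `p`-power index and `x` has order coprime to `p`, then `x ∈ N`. -/
lemma mem_of_coprime_orderOf [Finite G] {p : ℕ} (hp : p.Prime)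
    (N : Subgroup G) (hN : N.Normal) {k : ℕ} (hidx : N.index = p ^ k)
    {x : G} (hx : (orderOf x).Coprime p) : x ∈ N := by
  haveI := hN
  have h1 : orderOf ((x : G ⧸ N)) ∣ orderOf x := orderOf_map_dvd (QuotientGroup.mk' N) x
  have h2 : orderOf ((x : G ⧸ N)) ∣ p ^ k := by
    have := orderOf_dvd_natCard (x : G ⧸ N)
    rwa [show Nat.card (G ⧸ N) = N.index from rfl, hidx] at this
  have h3 : orderOf ((x : G ⧸ N)) = 1 :=
    Nat.eq_one_of_dvd_coprimes (hx.pow_right k) h1 h2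
  rw [orderOf_eq_one_iff] at h3
  exact (QuotientGroup.eq_one_iff x).mp h3

/-- The subgroup generated by all `p'`-elements. -/
def pResidualAux (p : ℕ) (G : Type*) [Group G] : Subgroup G :=
  Subgroup.closure {g : G | (orderOf g).Coprime p}

lemma pResidualAux_normal (p : ℕ) : (pResidualAux p G).Normal := by
  constructor
  intro n hn g
  have hmap : Subgroup.map (MulAut.conj g).toMonoidHom (pResidualAux p G) ≤ pResidualAux p G := by
    rw [pResidualAux, MonoidHom.map_closure]
    apply Subgroup.closure_mono
    rintro _ ⟨y, hy, rfl⟩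
    show (orderOf ((MulAut.conj g).toMonoidHom y)).Coprime p
    rw [orderOf_injective _ (MulAut.conj g).injective y]
    exact hy
  have : g * n * g⁻¹ ∈ Subgroup.map (MulAut.conj g).toMonoidHom (pResidualAux p G) :=
    ⟨n, hn, rfl⟩
  exact hmap this

lemma pResidualAux_le {p : ℕ} [Finite G] (hp : p.Prime) (N : Subgroup G) (hN : N.Normal)
    {k : ℕ} (hidx : N.index = p ^ k) : pResidualAux p G ≤ N := by
  rw [pResidualAux, Subgroup.closure_le]
  intro g hg
  exact mem_of_coprime_orderOf hp N hN hidx hg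

lemma pResidualAux_index {p : ℕ} [Finite G] (hp : p.Prime) :
    ∃ k : ℕ, (pResidualAux p G).index = p ^ k := by
  haveI : Fact p.Prime := ⟨hp⟩
  haveI := pResidualAux_normal (G := G) p
  have hpg : IsPGroup p (G ⧸ pResidualAux p G) := by
    intro q
    obtain ⟨x, rfl⟩ := QuotientGroup.mk_surjective q
    refine ⟨(orderOf x).factorization p, ?_⟩
    have hxne : orderOf x ≠ 0 := (orderOf_pos x).ne'
    have hdvd : p ^ (orderOf x).factorization p ∣ orderOf x := Nat.ordProj_dvd _ _
    have hmem : x ^ p ^ (orderOf x).factorization p ∈ pResidualAux p G := by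
      apply Subgroup.subset_closure
      have : orderOf (x ^ p ^ (orderOf x).factorization p) =
          orderOf x / p ^ (orderOf x).factorization p := by
        rw [orderOf_pow_of_dvd (pow_ne_zero _ hp.ne_zero) hdvd]
      rw [Set.mem_setOf_eq, this]
      exact (Nat.coprime_ordCompl hp hxne).symm
    have : ((x ^ p ^ (orderOf x).factorization p : G) : G ⧸ pResidualAux p G) = 1 :=
      (QuotientGroup.eq_one_iff _).mpr hmem
    rw [← this]
    rfl
  obtain ⟨k, hk⟩ := (IsPGroup.iff_card).mp hpg
  exact ⟨k, hk⟩

lemma pResidual_eq_aux {p : ℕ} [Finite G] (hp : p.Prime) :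
    pResidual p G = pResidualAux p G := by
  apply le_antisymm
  · obtain ⟨k, hk⟩ := pResidualAux_index (G := G) hp
    exact sInf_le ⟨pResidualAux_normal p, k, hk⟩
  · apply le_sInf
    rintro N ⟨hN, k, hk⟩
    exact pResidualAux_le hp N hN hk

lemma pResidual_normal {p : ℕ} [Finite G] (hp : p.Prime) : (pResidual p G).Normal := by
  rw [pResidual_eq_aux hp]; exact pResidualAux_normal p

lemma pResidual_index {p : ℕ} [Finite G] (hp : p.Prime) :
    ∃ k : ℕ, (pResidual p G).index = p ^ k := by
  rw [pResidual_eq_aux hp]; exact pResidualAux_index hp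

lemma normal_subgroupOf_of_le_normalizer {A B : Subgroup G} (hAB : A ≤ B)
    (h : B ≤ Subgroup.normalizer (A : Set G)) : (A.subgroupOf B).Normal := by
  constructor
  rintro ⟨a, haB⟩ ha ⟨b, hbB⟩
  simp only [Subgroup.mem_subgroupOf] at ha ⊢
  exact ((h hbB) a).mp ha

lemma comap_normalizer_le {H : Type*} [Group H] (f : G →* H) (K : Subgroup H) :
    (Subgroup.normalizer (K : Set H)).comap f ≤ Subgroup.normalizer ((K.comap f : Subgroup G) : Set G) := by
  intro x hx
  rw [Subgroup.mem_comap] at hx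
  intro a
  simp only [SetLike.mem_coe, Subgroup.mem_comap, map_mul, map_inv]
  exact (Subgroup.mem_normalizer_iff.mp hx) (f a)

end Aux

/-- For a finite group `G` and a prime `p`, a subgroup `H` contains `O^p(G)` if and
only if `H` is `p`-subnormal in `G`. -/
theorem stmt8 (G : Type*) [Group G] [Finite G] (p : ℕ) (hp : p.Prime) (H : Subgroup G) :
    pResidual p G ≤ H ↔ IsPSubnormal p H := by
  constructor
  · -- forward direction: build a chain via iterated normalizers in the quotient
    intro hle
    haveI hRn : (pResidual p G).Normal := pResidual_normal hp
    obtain ⟨k, hk⟩ := pResidual_index (G := G) hp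
    haveI : Fact p.Prime := ⟨hp⟩
    set R := pResidual p G with hR
    set Q := G ⧸ R
    set π : G →* Q := QuotientGroup.mk' R with hπ
    have hker : π.ker = R := QuotientGroup.ker_mk' R
    have hQp : IsPGroup p Q := IsPGroup.of_card (n := k) (by rwa [show Nat.card Q = R.index from rfl])
    haveI : _root_.Group.IsNilpotent Q := hQp.isNilpotent
    have hnc : NormalizerCondition Q := normalizerCondition_of_isNilpotent
    set f : ℕ → Subgroup Q := fun j => (fun K : Subgroup Q => Subgroup.normalizer (K : Set Q))^[j] (H.map π) with hf
    have hfsucc : ∀ j, f (j + 1) = Subgroup.normalizer (f j : Set Q) := fun j =>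
      Function.iterate_succ_apply' _ _ _
    have hmono : ∀ j, f j ≤ f (j + 1) := fun j => by
      rw [hfsucc]; exact Subgroup.le_normalizer
    set n := Nat.card Q with hn
    have hgrow : ∀ j, f j = ⊤ ∨ j < Nat.card (f j) := by
      intro j
      induction j with
      | zero => exact Or.inr Nat.card_pos
      | succ j ih =>
        rcases ih with h | h
        · left; rw [hfsucc, h, Subgroup.normalizer_eq_top_iff.mpr inferInstance]
        · by_cases htop : f j = ⊤
          · left; rw [hfsucc, htop, Subgroup.normalizer_eq_top_iff.mpr inferInstance]
          · right
            have hlt : f j < f (j + 1) := by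
              rw [hfsucc]; exact hnc _ (lt_top_iff_ne_top.mpr htop)
            have hcard : Nat.card (f j) < Nat.card (f (j + 1)) := by
              rw [← SetLike.coe_sort_coe, ← SetLike.coe_sort_coe,
                Nat.card_coe_set_eq, Nat.card_coe_set_eq]
              exact Set.ncard_lt_ncard (Set.lt_iff_ssubset.mp
                (by exact_mod_cast hlt)) (Set.toFinite _)
            omega
    have hftop : f n = ⊤ := by
      rcases hgrow n with h | h
      · exact h
      · exact absurd (Subgroup.card_le_card_group (f n)) (by omega)
    refine ⟨n, fun i => (f i).comap π, ?_, ?_, ?_⟩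
    · show (f 0).comap π = H
      simp only [hf, Function.iterate_zero, id_eq]
      rw [Subgroup.comap_map_eq, hker, sup_eq_left.mpr hle]
    · show (f n).comap π = ⊤
      rw [hftop, Subgroup.comap_top]
    · intro i
      set A := (f i.castSucc).comap π
      set B := (f i.succ).comap π
      have hBf : f (i.succ : ℕ) = Subgroup.normalizer (f i : Set Q) := by
        rw [Fin.val_succ, hfsucc]
      have hAB : A ≤ B := Subgroup.comap_mono (by
        rw [show ((i.castSucc : Fin (n+1)) : ℕ) = (i : ℕ) from rfl, hBf]
        exact Subgroup.le_normalizer)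
      have hBnorm : B ≤ Subgroup.normalizer (A : Set G) := by
        calc B = (Subgroup.normalizer (f i : Set Q)).comap π := by rw [show B = (f i.succ).comap π from rfl, hBf]
        _ ≤ Subgroup.normalizer (((f i).comap π : Subgroup G) : Set G) := comap_normalizer_le π _
        _ = Subgroup.normalizer (A : Set G) := rfl
      refine ⟨normal_subgroupOf_of_le_normalizer hAB hBnorm, ?_⟩
      have hRA : R ≤ A := by rw [← hker]; exact Subgroup.ker_le_comap _ _
      have hRB : R ≤ B := hRA.trans hAB
      have hmul : R.relIndex A * A.relIndex B = R.relIndex B :=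
        Subgroup.relIndex_mul_relIndex R A B hRA hAB
      have hdvd : A.relIndex B ∣ p ^ k := by
        have h1 : A.relIndex B ∣ R.relIndex B := Dvd.intro_left _ hmul
        have h2 : R.relIndex B ∣ R.index := Subgroup.relIndex_dvd_index_of_normal R B
        rw [← hk]
        exact h1.trans h2
      obtain ⟨m, _, hm⟩ := (Nat.dvd_prime_pow hp).mp hdvd
      exact ⟨m, hm⟩
  · -- reverse direction: p'-elements descend along the chain
    rintro ⟨n, c, hc0, hctop, hchain⟩
    rw [pResidual_eq_aux hp, pResidualAux, Subgroup.closure_le]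
    intro g hg
    have hg' : (orderOf g).Coprime p := hg
    have key : ∀ j : ℕ, ∀ hj : j ≤ n, g ∈ c ⟨n - j, by omega⟩ := by
      intro j
      induction j with
      | zero =>
        intro _
        have : (⟨n - 0, by omega⟩ : Fin (n + 1)) = Fin.last n := by
          ext; simp
        rw [this, hctop]; trivial
      | succ j ih =>
        intro hj
        have hmem : g ∈ c ⟨n - j, by omega⟩ := ih (by omega)
        set i : Fin n := ⟨n - (j + 1), by omega⟩ with hi
        have hics : (i.castSucc : Fin (n + 1)) = ⟨n - (j + 1), by omega⟩ := rfl
        have hisucc : (i.succ : Fin (n + 1)) = ⟨n - j, by omega⟩ := by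
          apply Fin.ext
          show n - (j + 1) + 1 = n - j
          omega
        obtain ⟨hnorm, k, hidx⟩ := hchain i
        rw [hisucc, hics] at hnorm hidx
        exact Subgroup.mem_subgroupOf.mp
          (mem_of_coprime_orderOf hp _ hnorm hidx (x := ⟨g, hmem⟩)
            (by rwa [Subgroup.orderOf_mk]))
      
    have := key n le_rfl
    have h0 : (⟨n - n, by omega⟩ : Fin (n + 1)) = 0 := by ext; simp
    rwa [h0, hc0] at this
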